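/- In the MV single-point game with p ≥ 1 correct players and w ≥ 0 incorrect players, the Shapley value of every correct player equals SV^+_{p,w} = (1/(p+w)) Σ_{i=0}^{p−1} Σ_{j=0}^{w} ψ(i, j) · binom(p−1, i) · binom(w, j) / binom(p+w−1, i+j). -/

import Mathlib

open Finset

/-- Shapley value of player `j` in the cooperative game `v` on the finite player set `I`. -/
noncomputable def shapley {α : Type*} [DecidableEq α] (I : Finset α) (v : Finset α → ℝ)
    (j : α) : ℝ :=
  (1 / (I.card : ℝ)) * ∑ S ∈ (I.erase j).powerset,
    (v (insert j S) - v S) / ((I.card - 1).choose S.card : ℝ)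

/-- Marginal utility `ψ(a,b)` of a correct LF joining a coalition with `a` correct and `b`
incorrect LFs, with `C` classes. -/
noncomputable def psi (C a b : ℕ) : ℝ :=
  if a + b = 0 then 1 - 1 / (C : ℝ)
  else ((a : ℝ) + 1) / ((a : ℝ) + (b : ℝ) + 1) - (a : ℝ) / ((a : ℝ) + (b : ℝ))

/-- `SV⁺_{p,w}` (equals `0` when `p = 0` since the outer sum is empty). -/
noncomputable def SVpos (C p w : ℕ) : ℝ :=
  (1 / ((p : ℝ) + (w : ℝ))) * ∑ i ∈ Finset.range p, ∑ j ∈ Finset.range (w + 1),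
    psi C i j * ((p - 1).choose i : ℝ) * (w.choose j : ℝ) / ((p + w - 1).choose (i + j) : ℝ)

/-- `SV⁻_{p,w}`. -/
noncomputable def SVneg (C p w : ℕ) : ℝ :=
  ((p : ℝ) / ((p : ℝ) + (w : ℝ)) - 1 / (C : ℝ) - (p : ℝ) * SVpos C p w) / (w : ℝ)

/-- The MV single-point game: `P` the correct players, `W` the incorrect players,
utility `|S ∩ P|/|S| − 1/C` for nonempty `S`, and `0` on the empty coalition. -/
noncomputable def mvGame {α : Type*} [DecidableEq α] (C : ℕ) (P W : Finset α)
    (S : Finset α) : ℝ :=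
  if S = ∅ then 0 else ((S ∩ P).card : ℝ) / (S.card : ℝ) - 1 / (C : ℝ)

section AuxSumLemma

variable {α : Type*} [DecidableEq α]

lemma sum_powerset_union_card (A B : Finset α) (h : Disjoint A B) (F : ℕ → ℕ → ℝ) :
    ∑ S ∈ (A ∪ B).powerset, F (S ∩ A).card (S ∩ B).card
      = ∑ i ∈ range (A.card + 1), ∑ j ∈ range (B.card + 1),
          (A.card.choose i : ℝ) * (B.card.choose j : ℝ) * F i j := by
  have step1 : ∑ S ∈ (A ∪ B).powerset, F (S ∩ A).card (S ∩ B).card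
      = ∑ T ∈ A.powerset, ∑ U ∈ B.powerset, F T.card U.card := by
    rw [← Finset.sum_product']
    refine Finset.sum_nbij' (fun S => (S ∩ A, S ∩ B)) (fun q => q.1 ∪ q.2) ?_ ?_ ?_ ?_ ?_
    · intro S hS
      simp only [mem_product, mem_powerset]
      exact ⟨inter_subset_right, inter_subset_right⟩
    · intro q hq
      simp only [mem_product, mem_powerset] at hq
      exact mem_powerset.2 (union_subset_union hq.1 hq.2)
    · intro S hS
      rw [mem_powerset] at hS
      show S ∩ A ∪ S ∩ B = S
      rw [← inter_union_distrib_left]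
      exact inter_eq_left.2 hS
    · intro q hq
      simp only [mem_product, mem_powerset] at hq
      have h1 : (q.1 ∪ q.2) ∩ A = q.1 := by
        ext a
        simp only [mem_inter, mem_union]
        constructor
        · rintro ⟨h' | h', ha⟩
          · exact h'
          · exact absurd ha (Finset.disjoint_left.1 h.symm (hq.2 h'))
        · intro h'; exact ⟨Or.inl h', hq.1 h'⟩
      have h2 : (q.1 ∪ q.2) ∩ B = q.2 := by
        ext a
        simp only [mem_inter, mem_union]
        constructor
        · rintro ⟨h' | h', ha⟩
          · exact absurd ha (Finset.disjoint_left.1 h (hq.1 h'))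
          · exact h'
        · intro h'; exact ⟨Or.inr h', hq.2 h'⟩
      simp [h1, h2]
    · intro S hS; rfl
  rw [step1]
  rw [Finset.sum_powerset_apply_card (fun i => ∑ U ∈ B.powerset, F i U.card)]
  refine Finset.sum_congr rfl fun i _ => ?_
  rw [Finset.sum_powerset_apply_card (fun j => F i j), smul_sum]
  refine Finset.sum_congr rfl fun j _ => ?_
  rw [smul_smul, nsmul_eq_mul]
  push_cast
  ring

end AuxSumLemma

/-- In the MV single-point game with `p ≥ 1` correct players and `w ≥ 0` incorrect players,
the Shapley value of every correct player equals `SV⁺_{p,w}`. -/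
theorem stmt_0 {α : Type*} [DecidableEq α] (C : ℕ) (hC : 2 ≤ C)
    (P W : Finset α) (hPW : Disjoint P W) (hp : 1 ≤ P.card)
    (lam : α) (hlam : lam ∈ P) :
    shapley (P ∪ W) (mvGame C P W) lam = SVpos C P.card W.card := by
  have hlamW : lam ∉ W := fun h => Finset.disjoint_left.1 hPW hlam h
  set A := P.erase lam with hA
  have hAW : Disjoint A W := hPW.mono_left (erase_subset _ _)
  have hcard : (P ∪ W).card = P.card + W.card := card_union_of_disjoint hPW
  have hErase : (P ∪ W).erase lam = A ∪ W := by
    rw [erase_union_distrib, Finset.erase_eq_of_notMem hlamW]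
  have hAcard : A.card = P.card - 1 := card_erase_of_mem hlam
  unfold shapley
  rw [hErase, hcard]
  have key : ∀ S ∈ (A ∪ W).powerset,
      (mvGame C P W (insert lam S) - mvGame C P W S)
          / (((P.card + W.card - 1).choose S.card : ℕ) : ℝ)
      = (fun i j => psi C i j / (((P.card + W.card - 1).choose (i + j) : ℕ) : ℝ))
          (S ∩ A).card (S ∩ W).card := by
    intro S hS
    rw [mem_powerset] at hS
    have hlamS : lam ∉ S := fun h => by
      rcases mem_union.1 (hS h) with h' | h'
      · exact (notMem_erase lam P) h'
      · exact hlamW h'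
    have hSA : S ∩ P = S ∩ A := by
      ext a
      simp only [mem_inter, hA, mem_erase]
      constructor
      · rintro ⟨ha, hpa⟩
        exact ⟨ha, fun e => hlamS (e ▸ ha), hpa⟩
      · rintro ⟨ha, _, hpa⟩
        exact ⟨ha, hpa⟩
    have hsplit : (S ∩ A).card + (S ∩ W).card = S.card := by
      have hu : S ∩ A ∪ S ∩ W = S := by
        rw [← inter_union_distrib_left]
        exact inter_eq_left.2 hS
      rw [← card_union_of_disjoint (hAW.mono inter_subset_right inter_subset_right), hu]
    have hinsP : insert lam S ∩ P = insert lam (S ∩ P) := insert_inter_of_mem hlam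
    have hcardins : (insert lam S ∩ P).card = (S ∩ A).card + 1 := by
      rw [hinsP, card_insert_of_notMem (fun h => hlamS (mem_inter.1 h).1), hSA]
    have hScard : (insert lam S).card = S.card + 1 := card_insert_of_notMem hlamS
    by_cases hSe : S = ∅
    · subst hSe
      simp only [insert_empty_eq, empty_inter, card_empty, Nat.choose_zero_right]
      rw [mvGame, mvGame, if_pos rfl, if_neg (singleton_ne_empty lam)]
      rw [singleton_inter_of_mem hlam]
      simp [psi]
    · have hSne : insert lam S ≠ ∅ := insert_ne_empty _ _
      have hij : (S ∩ A).card + (S ∩ W).card ≠ 0 := by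
        rw [hsplit]
        exact card_ne_zero.2 (nonempty_of_ne_empty hSe)
      rw [mvGame, mvGame, if_neg hSne, if_neg hSe]
      simp only [psi, if_neg hij]
      rw [hcardins, hScard, hSA, ← hsplit]
      push_cast
      ring
  rw [Finset.sum_congr rfl key,
    sum_powerset_union_card A W hAW
      (fun i j => psi C i j / (((P.card + W.card - 1).choose (i + j) : ℕ) : ℝ)),
    hAcard, Nat.sub_add_cancel hp]
  unfold SVpos
  rw [Nat.cast_add]
  congr 1
  refine Finset.sum_congr rfl fun i _ => Finset.sum_congr rfl fun j _ => ?_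
  ring
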